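/- arXiv:1305.5585 — 2 statements merged into one kernel-verified Lean document; each statement's English description precedes it below -/
import Mathlib

section
/- Let (x*, y*, z*) be an optimal solution of the relaxed association problem with Lagrange multipliers λⱼ for the normal-RB constraints, satisfying the stationarity condition c⁽ⁿ⁾_{ij}/Rᵢ = λⱼ whenever x*_{ij} > 0. If users i and m both have x*_{ij} > 0, x*_{in} > 0, x*_{mj} > 0, x*_{mn} > 0 for two distinct BSs j ≠ n, then c⁽ⁿ⁾_{ij} · c⁽ⁿ⁾_{mn} = c⁽ⁿ⁾_{in} · c⁽ⁿ⁾_{mj}. -/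
/-- KKT cycle condition: if the stationarity condition `c⁽ⁿ⁾ᵢⱼ / Rᵢ = λⱼ` holds
whenever `x*ᵢⱼ > 0`, and users `i ≠ m` are both served by two distinct BSs `j ≠ n`
in normal RBs, then `c⁽ⁿ⁾ᵢⱼ · c⁽ⁿ⁾ₘₙ = c⁽ⁿ⁾ᵢₙ · c⁽ⁿ⁾ₘⱼ`. -/
theorem kkt_cycle_condition (NU NB : ℕ)
    (cn : Fin NU → Fin NB → ℝ)
    (x : Fin NU → Fin NB → ℝ)
    (R : Fin NU → ℝ) (hR : ∀ i, 0 < R i)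
    (lam : Fin NB → ℝ) (hlam : ∀ j, 0 < lam j)
    (hstat : ∀ i j, 0 < x i j → cn i j / R i = lam j)
    (i m : Fin NU) (him : i ≠ m)
    (j n : Fin NB) (hjn : j ≠ n)
    (hij : 0 < x i j) (hin : 0 < x i n) (hmj : 0 < x m j) (hmn : 0 < x m n) :
    cn i j * cn m n = cn i n * cn m j := by
  have h1 := hstat i j hij
  have h2 := hstat i n hin
  have h3 := hstat m j hmj
  have h4 := hstat m n hmn
  have hRi := (hR i).ne'
  have hRm := (hR m).ne'
  have e1 : cn i j = lam j * R i := by field_simp at h1; linarith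
  have e2 : cn i n = lam n * R i := by field_simp at h2; linarith
  have e3 : cn m j = lam j * R m := by field_simp at h3; linarith
  have e4 : cn m n = lam n * R m := by field_simp at h4; linarith
  rw [e1, e2, e3, e4]; ring
end

section
/- Let G be a graph on user-vertices where each edge is colored by a BS index, such that (a) any two vertices share at most one edge, and (b) every monochromatic edge set forms a clique, and (c) there is no cycle using edges of more than one color. Then the number of vertices incident to edges of at least two different colors is at most N_B − 1, where N_B is the number of colors actually used. -/
section FracAux

variable {V : Type*} [Fintype V] {NB : ℕ}

/-- Color `j` is actually used (joins two distinct users). -/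
def FracUsed (serves : Fin NB → V → Prop) (j : Fin NB) : Prop :=
  ∃ u v : V, u ≠ v ∧ serves j u ∧ serves j v

/-- `v` is a fractional user. -/
def FracV (serves : Fin NB → V → Prop) (v : V) : Prop :=
  ∃ j k : Fin NB, ∃ u w : V, j ≠ k ∧ u ≠ v ∧ w ≠ v ∧
    serves j v ∧ serves j u ∧ serves k v ∧ serves k w

/-- No multicolored cycle. -/
def FracNoMC (serves : Fin NB → V → Prop) : Prop :=
  ¬ ∃ (n : ℕ) (hn : 3 ≤ n) (v : Fin n → V) (col : Fin n → Fin NB),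
      Function.Injective v ∧
      (∀ k : Fin n, serves (col k) (v k) ∧ serves (col k) (v (k + ⟨1, Nat.lt_of_lt_of_le (by decide) hn⟩))) ∧
      ¬ ∀ k k' : Fin n, col k = col k'

lemma frac_no_walk (serves : Fin NB → V → Prop)
    (hone : ∀ u v : V, u ≠ v → ∀ j k : Fin NB,
      serves j u → serves j v → serves k u → serves k v → j = k)
    (hnc : FracNoMC serves)
    (v : ℕ → V) (c : ℕ → Fin NB)
    (hv : ∀ n, v (n+1) ≠ v n)
    (hc : ∀ n, c (n+1) ≠ c n)
    (he1 : ∀ n, serves (c (n+1)) (v n))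
    (he2 : ∀ n, serves (c (n+1)) (v (n+1))) : False := by
  classical
  have hrep : ∃ m, ∃ i, i < m ∧ v i = v m := by
    obtain ⟨a, b, hab, h⟩ := Finite.exists_ne_map_eq_of_infinite v
    rcases lt_or_gt_of_ne hab with h' | h'
    · exact ⟨b, a, h', h⟩
    · exact ⟨a, b, h', h.symm⟩
  set m := Nat.find hrep with hm
  obtain ⟨i, him, hvi⟩ := Nat.find_spec hrep
  have hmin : ∀ m' , m' < m → ¬ ∃ i, i < m' ∧ v i = v m' := fun m' h => Nat.find_min hrep h
  have hinj : ∀ a b, a < b → b < m → v a ≠ v b := by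
    intro a b hab hbm h
    exact hmin b hbm ⟨a, hab, h⟩
  set n := m - i with hn
  have hmi : m = i + n := by omega
  have hn2 : 2 ≤ n := by
    by_contra h
    have hn1 : n = 1 := by omega
    have : m = i + 1 := by omega
    exact hv i (this ▸ hvi.symm)
  rcases eq_or_lt_of_le hn2 with hn2' | hn3
  · -- n = 2 : two vertices joined by two colors
    have hm2 : m = i + 2 := by omega
    have h1 : serves (c (i+1)) (v i) := he1 i
    have h2 : serves (c (i+1)) (v (i+1)) := he2 i
    have h3 : serves (c (i+2)) (v (i+1)) := he1 (i+1)
    have hm' : v (i+2) = v i := by rw [← hm2]; exact hvi.symm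
    have h4 : serves (c (i+2)) (v i) := by rw [← hm']; exact he2 (i+1)
    have hne : v i ≠ v (i+1) := fun h => hv i h.symm
    exact hc (i+1) (hone (v i) (v (i+1)) hne _ _ h4 h3 h1 h2)
  · -- n ≥ 3 : multicolored cycle
    have hn3' : 3 ≤ n := hn3
    apply hnc
    refine ⟨n, hn3', fun k => v (i + k.val), fun k => c (i + k.val + 1), ?_, ?_, ?_⟩
    · intro a b hab
      by_contra hne
      rcases lt_or_gt_of_ne (fun h : a.val = b.val => hne (Fin.ext h)) with h' | h'
      · exact hinj (i + a.val) (i + b.val) (by omega) (by omega) hab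
      · exact hinj (i + b.val) (i + a.val) (by omega) (by omega) hab.symm
    · intro k
      refine ⟨he1 (i + k.val), ?_⟩
      show serves (c (i + k.val + 1)) (v (i + ((k + ⟨1, by omega⟩ : Fin n)).val))
      have hval : ((k + ⟨1, by omega⟩ : Fin n)).val = (k.val + 1) % n := by
        simp [Fin.add_def]
      by_cases h : k.val + 1 < n
      · have hv' : ((k + ⟨1, by omega⟩ : Fin n)).val = k.val + 1 := by
          rw [hval, Nat.mod_eq_of_lt h]
        rw [hv', show i + (k.val + 1) = i + k.val + 1 by omega]
        exact he2 (i + k.val)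
      · have hkn : k.val + 1 = n := by have := k.isLt; omega
        have hv' : ((k + ⟨1, by omega⟩ : Fin n)).val = 0 := by
          rw [hval, hkn, Nat.mod_self]
        rw [hv', show i + 0 = i by omega, hvi, ← hm,
          show m = i + k.val + 1 by omega]
        exact he2 (i + k.val)
    · intro hall
      have h01 := hall ⟨0, by omega⟩ ⟨1, by omega⟩
      simp only [] at h01
      exact hc (i+1) (by simpa using h01.symm)

lemma frac_exists_pendant (serves : Fin NB → V → Prop)
    (hone : ∀ u v : V, u ≠ v → ∀ j k : Fin NB,
      serves j u → serves j v → serves k u → serves k v → j = k)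
    (hnc : FracNoMC serves) (v0 : V) (h0 : FracV serves v0) :
    ∃ j, FracUsed serves j ∧ {v | FracV serves v ∧ serves j v}.ncard ≤ 1 := by
  classical
  by_contra hcon
  push_neg at hcon
  have pick : ∀ v j, FracV serves v →
      ∃ v' j', FracV serves v' ∧ v' ≠ v ∧ j' ≠ j ∧ serves j' v ∧ serves j' v' := by
    intro v j hf
    obtain ⟨a, b, u, w, hab, hu, hw, hav, hau, hbv, hbw⟩ := hf
    obtain ⟨j', hj', hj'v, x, hx, hj'x⟩ :
        ∃ j', j' ≠ j ∧ serves j' v ∧ ∃ x, x ≠ v ∧ serves j' x := by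
      by_cases h : a = j
      · exact ⟨b, fun hh => hab (h.trans hh.symm), hbv, w, hw, hbw⟩
      · exact ⟨a, h, hav, u, hu, hau⟩
    have hused : FracUsed serves j' := ⟨x, v, hx, hj'x, hj'v⟩
    have h2 := hcon j' hused
    rw [Set.one_lt_ncard_iff (Set.toFinite _)] at h2
    obtain ⟨p, q, hp, hq, hpq⟩ := h2
    by_cases hpv : p = v
    · exact ⟨q, j', hq.1, fun h => hpq (hpv.trans h.symm), hj', hj'v, hq.2⟩
    · exact ⟨p, j', hp.1, hpv, hj', hj'v, hp.2⟩
  obtain ⟨a, _, _, _, _, _, _, _, _, _, _⟩ := id h0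
  have hstep : ∀ p : {p : V × Fin NB // FracV serves p.1},
      ∃ q : {p : V × Fin NB // FracV serves p.1},
        q.1.1 ≠ p.1.1 ∧ q.1.2 ≠ p.1.2 ∧ serves q.1.2 p.1.1 ∧ serves q.1.2 q.1.1 := by
    rintro ⟨⟨v, j⟩, hf⟩
    obtain ⟨v', j', hf', hne, hjne, hsv, hsv'⟩ := pick v j hf
    exact ⟨⟨(v', j'), hf'⟩, hne, hjne, hsv, hsv'⟩
  choose stepF h1 h2 h3 h4 using hstep
  let f : ℕ → {p : V × Fin NB // FracV serves p.1} := fun n => stepF^[n] ⟨(v0, a), h0⟩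
  have hfs : ∀ n, f (n+1) = stepF (f n) := fun n => Function.iterate_succ_apply' stepF n _
  exact frac_no_walk serves hone hnc (fun n => (f n).1.1) (fun n => (f n).1.2)
    (fun n => by have := h1 (f n); rw [← hfs n] at this; exact this)
    (fun n => by have := h2 (f n); rw [← hfs n] at this; exact this)
    (fun n => by have := h3 (f n); rw [← hfs n] at this; exact this)
    (fun n => by have := h4 (f n); rw [← hfs n] at this; exact this)

lemma frac_main_aux (C : ℕ) : ∀ (serves : Fin NB → V → Prop),
    (∀ u v : V, u ≠ v → ∀ j k : Fin NB,
      serves j u → serves j v → serves k u → serves k v → j = k) →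
    FracNoMC serves → {j | FracUsed serves j}.ncard = C →
    {v | FracV serves v}.ncard ≤ C - 1 := by
  induction C using Nat.strong_induction_on with
  | _ C IH =>
  intro serves hone hnc hC
  by_cases hfe : {v | FracV serves v} = ∅
  · rw [hfe]; simp
  · obtain ⟨v0, h0⟩ := Set.nonempty_iff_ne_empty.mpr hfe
    have h0' : FracV serves v0 := h0
    obtain ⟨a, b, u, w, hab, hu, hw, hav, hau, hbv, hbw⟩ := id h0'
    have hC2 : 2 ≤ C := by
      rw [← hC]
      have : 1 < {j | FracUsed serves j}.ncard := by
        rw [Set.one_lt_ncard_iff (Set.toFinite _)]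
        exact ⟨a, b, ⟨u, v0, hu, hau, hav⟩, ⟨w, v0, hw, hbw, hbv⟩, hab⟩
      omega
    obtain ⟨j, hjU, hj1⟩ := frac_exists_pendant serves hone hnc v0 h0'
    set serves' : Fin NB → V → Prop := fun k x => serves k x ∧ k ≠ j with hs'
    have hone' : ∀ u v : V, u ≠ v → ∀ p q : Fin NB,
        serves' p u → serves' p v → serves' q u → serves' q v → p = q :=
      fun u v huv p q hp hq hr hs => hone u v huv p q hp.1 hq.1 hr.1 hs.1
    have hnc' : FracNoMC serves' := by
      rintro ⟨n, hn, vv, col, hinj, hed, hcol⟩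
      exact hnc ⟨n, hn, vv, col, hinj, fun k => ⟨(hed k).1.1, (hed k).2.1⟩, hcol⟩
    have hUsed' : {k | FracUsed serves' k} = {k | FracUsed serves k} \ {j} := by
      ext k
      simp only [Set.mem_setOf_eq, Set.mem_diff, Set.mem_singleton_iff]
      constructor
      · rintro ⟨x, y, hxy, ⟨hx, hk⟩, hy, _⟩
        exact ⟨⟨x, y, hxy, hx, hy⟩, hk⟩
      · rintro ⟨⟨x, y, hxy, hx, hy⟩, hk⟩
        exact ⟨x, y, hxy, ⟨hx, hk⟩, ⟨hy, hk⟩⟩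
    have hCard' : {k | FracUsed serves' k}.ncard = C - 1 := by
      rw [hUsed', Set.ncard_diff_singleton_of_mem (show j ∈ {k | FracUsed serves k} from hjU), hC]
    have hIH := IH (C-1) (by omega) serves' hone' hnc' hCard'
    have hsub : {v | FracV serves v} ⊆
        {v | FracV serves' v} ∪ {v | FracV serves v ∧ serves j v} := by
      intro x hx
      have hx' : FracV serves x := hx
      obtain ⟨p, q, y, z, hpq, hy, hz, hpv, hpx, hqv, hqy⟩ := id hx'
      by_cases hpj : p = j
      · exact Or.inr ⟨hx', hpj ▸ hpv⟩
      · by_cases hqj : q = j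
        · exact Or.inr ⟨hx', hqj ▸ hqv⟩
        · exact Or.inl ⟨p, q, y, z, hpq, hy, hz,
            ⟨hpv, hpj⟩, ⟨hpx, hpj⟩, ⟨hqv, hqj⟩, ⟨hqy, hqj⟩⟩
    have hle := Set.ncard_le_ncard hsub (Set.toFinite _)
    have hun := Set.ncard_union_le {v | FracV serves' v} {v | FracV serves v ∧ serves j v}
    omega

end FracAux

/-- Combinatorial core of Proposition 3. Users are vertices; `serves j v` means
BS (color) `j` serves user `v`, so that an edge of color `j` joins any two distinct
users served by `j` (monochromatic edge sets are thus cliques). If (a) any two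
vertices share at most one edge, and (c) there is no cycle using edges of more than
one color, then the number of vertices incident to edges of at least two colors
(fractional users) is at most the number of colors actually used minus one. -/
theorem fractional_users_le_colors_sub_one {V : Type*} [Fintype V] (NB : ℕ)
    (serves : Fin NB → V → Prop)
    -- (a) any two distinct vertices share at most one edge (one common color):
    (hone : ∀ u v : V, u ≠ v → ∀ j k : Fin NB,
      serves j u → serves j v → serves k u → serves k v → j = k)
    -- (c) no cycle uses edges of more than one color:
    (hnocycle : ¬ ∃ (n : ℕ) (hn : 3 ≤ n) (v : Fin n → V) (col : Fin n → Fin NB),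
      Function.Injective v ∧
      (∀ k : Fin n, serves (col k) (v k) ∧ serves (col k) (v (k + ⟨1, by omega⟩))) ∧
      ¬ ∀ k k' : Fin n, col k = col k') :
    Nat.card {v : V // ∃ j k : Fin NB, ∃ u w : V, j ≠ k ∧ u ≠ v ∧ w ≠ v ∧
        serves j v ∧ serves j u ∧ serves k v ∧ serves k w} ≤
      Nat.card {j : Fin NB // ∃ u v : V, u ≠ v ∧ serves j u ∧ serves j v} - 1 := by
  have e1 : Nat.card {v : V // ∃ j k : Fin NB, ∃ u w : V, j ≠ k ∧ u ≠ v ∧ w ≠ v ∧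
      serves j v ∧ serves j u ∧ serves k v ∧ serves k w} =
      ({v | FracV serves v} : Set V).ncard := Nat.card_coe_set_eq _
  have e2 : Nat.card {j : Fin NB // ∃ u v : V, u ≠ v ∧ serves j u ∧ serves j v} =
      ({j | FracUsed serves j} : Set (Fin NB)).ncard := Nat.card_coe_set_eq _
  rw [e1, e2]
  exact frac_main_aux _ serves hone hnocycle rfl
end
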